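/- Let A = ⊕_{g∈Γ} A_g be a Γ-graded unital ℂ-algebra, ω₀ an ℝ-valued 2-cocycle on Γ, and μ(x,y) = ω₀(g,h)·xy (x ∈ A_g, y ∈ A_h, extended bilinearly). Let φ : A^{⊗(n+1)} → ℂ be a multilinear functional which is a Hochschild n-cocycle, i.e. bφ = 0. Define the multilinear functional ψ : A^{⊗(n+3)} → ℂ by ψ(f⁰, f¹, …, f^{n+2}) = −φ( μ(f^{n+1}, f^{n+2})·f⁰, f¹, …, fⁿ ). Then ψ is a Hochschild (n+2)-cocycle: bψ = 0. -/

import Mathlib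

/-- The Hochschild coboundary of an `m`-cochain (a functional on `A^{⊗(m+1)}`):
`(bχ)(f⁰,…,f^{m+1}) = Σ_{j=0}^m (−1)^j χ(f⁰,…,f^j f^{j+1},…,f^{m+1})
+ (−1)^{m+1} χ(f^{m+1} f⁰, f¹,…,f^m)`. -/
noncomputable def hochCobound {A : Type} [Ring A] (m : ℕ) (χ : (Fin (m + 1) → A) → ℂ) :
    (Fin (m + 2) → A) → ℂ := fun f =>
  (∑ j ∈ Finset.range (m + 1), (-1 : ℂ) ^ j *
      χ (fun i : Fin (m + 1) =>
        if i.val < j then f i.castSucc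
        else if i.val = j then
          f ⟨j % (m + 2), Nat.mod_lt j (by omega)⟩ *
            f ⟨(j + 1) % (m + 2), Nat.mod_lt (j + 1) (by omega)⟩
        else f i.succ))
    + (-1 : ℂ) ^ (m + 1) *
        χ (fun i : Fin (m + 1) =>
          if i.val = 0 then f (Fin.last (m + 1)) * f 0 else f i.castSucc)

/-- let `A = ⊕_{g∈Γ} A_g` be a Γ-graded unital ℂ-algebra, `ω₀` an ℝ-valued
2-cocycle on `Γ`, and `μ` the bilinear map with `μ(x,y) = ω₀(g,h)·xy` on homogeneous
elements.  If `φ : A^{⊗(n+1)} → ℂ` is a multilinear Hochschild `n`-cocycle (`bφ = 0`),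
then `ψ(f⁰,…,f^{n+2}) = −φ(μ(f^{n+1},f^{n+2})·f⁰, f¹,…,fⁿ)` is a Hochschild
`(n+2)`-cocycle: `bψ = 0`. -/
theorem stmt_12 (Γ : Type) [Group Γ] [DecidableEq Γ]
    (A : Type) [Ring A] [Algebra ℂ A]
    (𝒜 : Γ → Submodule ℂ A)
    (hinternal : DirectSum.IsInternal 𝒜)
    (hone : (1 : A) ∈ 𝒜 (1 : Γ))
    (hmul : ∀ (g h : Γ) (x y : A), x ∈ 𝒜 g → y ∈ 𝒜 h → x * y ∈ 𝒜 (g * h))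
    (ω₀ : Γ → Γ → ℝ)
    (hcoc : ∀ g h k : Γ, ω₀ g h + ω₀ (g * h) k = ω₀ g (h * k) + ω₀ h k)
    (μ : A →ₗ[ℂ] A →ₗ[ℂ] A)
    (hμ : ∀ (g h : Γ) (x y : A), x ∈ 𝒜 g → y ∈ 𝒜 h →
      μ x y = ((ω₀ g h : ℂ)) • (x * y))
    (n : ℕ)
    (φ : MultilinearMap ℂ (fun _ : Fin (n + 1) => A) ℂ)
    (hφ : hochCobound n ⇑φ = 0) :
    hochCobound (n + 2)
      (fun f : Fin (n + 3) → A =>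
        -(φ (fun i : Fin (n + 1) =>
          if i.val = 0 then
            μ (f ⟨n + 1, by omega⟩) (f ⟨n + 2, by omega⟩) * f ⟨0, by omega⟩
          else f ⟨i.val, by omega⟩))) = 0 := by
  have key : ∀ x y z : A, x * μ y z + μ x (y * z) = μ (x * y) z + μ x y * z := by
    have htop : ∀ a : A, a ∈ ⨆ g, 𝒜 g := by
      intro a; rw [hinternal.submodule_iSup_eq_top]; trivial
    intro x
    refine Submodule.iSup_induction 𝒜 (motive := fun x => ∀ y z : A,
        x * μ y z + μ x (y * z) = μ (x * y) z + μ x y * z) (htop x) ?_ (by simp) ?_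
    · intro g x hx y
      refine Submodule.iSup_induction 𝒜 (motive := fun y => ∀ z : A,
          x * μ y z + μ x (y * z) = μ (x * y) z + μ x y * z) (htop y) ?_ (by simp) ?_
      · intro h y hy z
        refine Submodule.iSup_induction 𝒜 (motive := fun z =>
            x * μ y z + μ x (y * z) = μ (x * y) z + μ x y * z) (htop z) ?_ (by simp) ?_
        · intro k z hz
          rw [hμ h k y z hy hz, hμ g (h * k) x (y * z) hx (hmul h k y z hy hz),
            hμ (g * h) k (x * y) z (hmul g h x y hx hy) hz, hμ g h x y hx hy]
          rw [mul_smul_comm, smul_mul_assoc, mul_assoc, ← add_smul, ← add_smul]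
          congr 1
          have := hcoc g h k
          norm_cast
          linarith
        · intro z₁ z₂ h₁ h₂
          simp only [mul_add, map_add, add_mul]
          rw [add_add_add_comm, h₁, h₂, add_add_add_comm]
      · intro y₁ y₂ h₁ h₂ z
        simp only [mul_add, add_mul, map_add, LinearMap.add_apply]
        rw [add_add_add_comm, h₁, h₂, add_add_add_comm]
    · intro x₁ x₂ h₁ h₂ y z
      simp only [mul_add, add_mul, map_add, LinearMap.add_apply]
      rw [add_add_add_comm, h₁, h₂, add_add_add_comm]
  funext f
  have hb := congrFun hφ (fun i : Fin (n + 2) =>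
    if i.val = 0 then μ (f ⟨n + 2, by omega⟩) (f ⟨n + 3, by omega⟩) * f ⟨0, by omega⟩
    else f ⟨i.val, by omega⟩)
  simp only [hochCobound, Pi.zero_apply] at hb ⊢
  rw [Finset.sum_range_succ, Finset.sum_range_succ]
  have hterm : ∀ j ∈ Finset.range (n + 1),
      ((-1 : ℂ) ^ j *
          -φ fun i : Fin (n + 1) =>
              if (i : ℕ) = 0 then
                (μ
                      (if n + 1 < j then f (⟨n + 1, by omega⟩ : Fin (n + 3)).castSucc
                      else
                        if n + 1 = j then f ⟨j % (n + 2 + 2), Nat.mod_lt _ (by omega)⟩ * f ⟨(j + 1) % (n + 2 + 2), Nat.mod_lt _ (by omega)⟩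
                        else f (⟨n + 1, by omega⟩ : Fin (n + 3)).succ))
                    (if n + 2 < j then f (⟨n + 2, by omega⟩ : Fin (n + 3)).castSucc
                    else
                      if n + 2 = j then f ⟨j % (n + 2 + 2), Nat.mod_lt _ (by omega)⟩ * f ⟨(j + 1) % (n + 2 + 2), Nat.mod_lt _ (by omega)⟩
                      else f (⟨n + 2, by omega⟩ : Fin (n + 3)).succ) *
                  if 0 < j then f (⟨0, by omega⟩ : Fin (n + 3)).castSucc
                  else if 0 = j then f ⟨j % (n + 2 + 2), Nat.mod_lt _ (by omega)⟩ * f ⟨(j + 1) % (n + 2 + 2), Nat.mod_lt _ (by omega)⟩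
                  else f (⟨0, by omega⟩ : Fin (n + 3)).succ
              else
                if (i : ℕ) < j then f (⟨(i : ℕ), by omega⟩ : Fin (n + 3)).castSucc
                else if (i : ℕ) = j then f ⟨j % (n + 2 + 2), Nat.mod_lt _ (by omega)⟩ * f ⟨(j + 1) % (n + 2 + 2), Nat.mod_lt _ (by omega)⟩
                else f (⟨(i : ℕ), by omega⟩ : Fin (n + 3)).succ)
        = -((-1 : ℂ) ^ j *
          φ fun i : Fin (n + 1) =>
            if (i : ℕ) < j then
              (if (i.castSucc : ℕ) = 0 then μ (f ⟨n + 2, by omega⟩) (f ⟨n + 3, by omega⟩) * f ⟨0, by omega⟩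
                else f ⟨(i.castSucc : ℕ), by omega⟩)
            else
              if (i : ℕ) = j then
                (if j % (n + 2) = 0 then μ (f ⟨n + 2, by omega⟩) (f ⟨n + 3, by omega⟩) * f ⟨0, by omega⟩
                  else f ⟨j % (n + 2), Nat.lt_of_lt_of_le (Nat.mod_lt _ (by omega)) (by omega)⟩) *
                  (if (j + 1) % (n + 2) = 0 then μ (f ⟨n + 2, by omega⟩) (f ⟨n + 3, by omega⟩) * f ⟨0, by omega⟩
                  else f ⟨(j + 1) % (n + 2), Nat.lt_of_lt_of_le (Nat.mod_lt _ (by omega)) (by omega)⟩)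
              else
                if (i.succ : ℕ) = 0 then μ (f ⟨n + 2, by omega⟩) (f ⟨n + 3, by omega⟩) * f ⟨0, by omega⟩
                else f ⟨(i.succ : ℕ), by omega⟩) := by
    intro j hj
    rw [Finset.mem_range] at hj
    rw [mul_neg, neg_inj]
    refine congrArg (fun t => ((-1:ℂ))^j * t) (congrArg (fun v => φ v) (funext fun i => ?_))
    have m1 : j % (n + 2 + 2) = j := Nat.mod_eq_of_lt (by omega)
    have m2 : (j + 1) % (n + 2 + 2) = j + 1 := Nat.mod_eq_of_lt (by omega)
    have m3 : j % (n + 2) = j := Nat.mod_eq_of_lt (by omega)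
    have m4 : (j + 1) % (n + 2) = j + 1 := Nat.mod_eq_of_lt (by omega)
    simp only [m1, m2, m3, m4, Fin.coe_castSucc, Fin.val_succ, Fin.castSucc_mk, Fin.succ_mk,
      show ¬(n + 1 < j) by omega, show ¬(n + 1 = j) by omega, show ¬(n + 2 < j) by omega,
      show ¬(n + 2 = j) by omega, Nat.succ_ne_zero, if_false, if_true]
    by_cases hi0 : (i : ℕ) = 0
    · rcases Nat.eq_zero_or_pos j with hj0 | hj0
      · simp [hi0, hj0, mul_assoc]
      · simp [hi0, hj0, hj0.ne']
    · rcases lt_trichotomy (i : ℕ) j with h | h | h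
      · simp [hi0, h, Nat.ne_of_lt h]
      · simp [hi0, h, lt_irrefl, show j ≠ 0 by omega]
      · simp [hi0, show ¬((i:ℕ) < j) by omega, show ¬((i:ℕ) = j) by omega]
  rw [Finset.sum_congr rfl hterm, Finset.sum_neg_distrib]
  have hlt : ∀ i : Fin (n + 1), (i : ℕ) < n + 2 := fun i => by omega
  have hlt1 : ∀ i : Fin (n + 1), (i : ℕ) < n + 1 := fun i => i.isLt
  simp only [show ¬(n + 1 < n + 1) by omega, show ¬(n + 2 < n + 1) by omega,
    show ¬(n + 2 < n + 2) by omega, show ¬(n + 2 = n + 1) by omega,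
    show ¬(n + 1 = n + 2) by omega, show (0:ℕ) < n + 1 by omega, show (0:ℕ) < n + 2 by omega,
    show ¬((0:ℕ) = n + 1) by omega, show ¬((0:ℕ) = n + 2) by omega,
    show ¬(n + 1 = 0) by omega, show ¬(n + 2 = 0) by omega,
    show (n + 1) % (n + 2 + 2) = n + 1 from Nat.mod_eq_of_lt (by omega),
    show (n + 1 + 1) % (n + 2 + 2) = n + 2 from Nat.mod_eq_of_lt (by omega),
    show (n + 2) % (n + 2 + 2) = n + 2 from Nat.mod_eq_of_lt (by omega),
    show (n + 2 + 1) % (n + 2 + 2) = n + 3 from Nat.mod_eq_of_lt (by omega),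
    hlt, hlt1, Fin.succ_mk, Fin.castSucc_mk, Fin.val_last, Fin.val_zero,
    if_true, if_false, eq_self_iff_true, lt_irrefl, show n + 1 < n + 2 by omega,
    Fin.coe_castSucc] at hb ⊢
  have hupd : ∀ a : A, (fun i : Fin (n + 1) => if (i : ℕ) = 0 then a else f ⟨(i : ℕ), by omega⟩)
      = Function.update (fun i : Fin (n + 1) => f ⟨(i : ℕ), by omega⟩) 0 a := by
    intro a; funext i
    by_cases h : i = 0
    · subst h; simp
    · have h' : (i : ℕ) ≠ 0 := fun hh => h (Fin.ext hh)
      simp [Function.update_apply, h, h']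
  have hupd2 : ∀ a b : A, (fun i : Fin (n + 1) =>
        if (i : ℕ) = 0 then a else if (i : ℕ) = 0 then b else f ⟨(i : ℕ), by omega⟩)
      = Function.update (fun i : Fin (n + 1) => f ⟨(i : ℕ), by omega⟩) 0 a := by
    intro a b; funext i
    by_cases h : i = 0
    · subst h; simp
    · have h' : (i : ℕ) ≠ 0 := fun hh => h (Fin.ext hh)
      simp [Function.update_apply, h, h']
  simp only [hupd, hupd2] at hb ⊢
  have hadd : f ⟨n + 1, by omega⟩ * ((μ (f ⟨n + 2, by omega⟩)) (f ⟨n + 3, by omega⟩) * f ⟨0, by omega⟩)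
        + (μ (f ⟨n + 1, by omega⟩)) (f ⟨n + 2, by omega⟩ * f ⟨n + 3, by omega⟩) * f ⟨0, by omega⟩
      = (μ (f ⟨n + 1, by omega⟩ * f ⟨n + 2, by omega⟩)) (f ⟨n + 2 + 1, by omega⟩) * f ⟨0, by omega⟩
        + (μ (f ⟨n + 1, by omega⟩)) (f ⟨n + 2, by omega⟩) * (f (Fin.last (n + 2 + 1)) * f 0) := by
    have hk := congrArg (· * f (⟨0, by omega⟩ : Fin (n + 2 + 2)))
      (key (f ⟨n + 1, by omega⟩) (f ⟨n + 2, by omega⟩) (f ⟨n + 3, by omega⟩))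
    simp only [add_mul] at hk
    have e0 : f (Fin.last (n + 2 + 1)) = f ⟨n + 3, by omega⟩ := rfl
    have e1 : f (0 : Fin (n + 2 + 2)) = f ⟨0, by omega⟩ := by congr 1
    have e2 : f (⟨n + 2 + 1, by omega⟩ : Fin (n + 2 + 2)) = f ⟨n + 3, by omega⟩ := rfl
    rw [e0, e1, e2, ← mul_assoc, ← mul_assoc]
    exact hk
  have hφadd : φ (Function.update (fun i : Fin (n + 1) => f ⟨(i : ℕ), by omega⟩) 0
          (f ⟨n + 1, by omega⟩ * ((μ (f ⟨n + 2, by omega⟩)) (f ⟨n + 3, by omega⟩) * f ⟨0, by omega⟩)))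
        + φ (Function.update (fun i : Fin (n + 1) => f ⟨(i : ℕ), by omega⟩) 0
          ((μ (f ⟨n + 1, by omega⟩)) (f ⟨n + 2, by omega⟩ * f ⟨n + 3, by omega⟩) * f ⟨0, by omega⟩))
      = φ (Function.update (fun i : Fin (n + 1) => f ⟨(i : ℕ), by omega⟩) 0
          ((μ (f ⟨n + 1, by omega⟩ * f ⟨n + 2, by omega⟩)) (f ⟨n + 2 + 1, by omega⟩) * f ⟨0, by omega⟩))
        + φ (Function.update (fun i : Fin (n + 1) => f ⟨(i : ℕ), by omega⟩) 0
          ((μ (f ⟨n + 1, by omega⟩)) (f ⟨n + 2, by omega⟩) * (f (Fin.last (n + 2 + 1)) * f 0))) := by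
    rw [← MultilinearMap.map_update_add, ← MultilinearMap.map_update_add, hadd]
  linear_combination (-1 : ℂ) * hb + (-1 : ℂ) ^ (n + 1) * hφadd
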